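/- For every integer k ≥ 0, set ν = k − n/2 + 1. Then the steady-state density decays exponentially away from the origin: 𝒜_k(z) · e^{z} · z^{1/2 − ν} → (2μ(λB)^k / (k! (4πD)^{n/2})) · (2λ)^{−ν} · √(π/2) as z → ∞. -/

import Mathlib

open Real MeasureTheory Set Filter Topology

noncomputable def phiAux (w : ℝ) : ℝ := w + Real.sqrt (1 + w ^ 2)

lemma sq1_pos (w : ℝ) : 0 < Real.sqrt (1 + w ^ 2) :=
  Real.sqrt_pos.2 (by positivity)

lemma sq1_sq (w : ℝ) : Real.sqrt (1 + w ^ 2) ^ 2 = 1 + w ^ 2 :=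
  Real.sq_sqrt (by positivity)

lemma abs_le_sq1 (w : ℝ) : |w| ≤ Real.sqrt (1 + w ^ 2) := by
  rw [← Real.sqrt_sq_eq_abs]
  exact Real.sqrt_le_sqrt (by nlinarith)

lemma one_le_sq1 (w : ℝ) : 1 ≤ Real.sqrt (1 + w ^ 2) := by
  nlinarith [sq1_sq w, sq1_pos w]

lemma sq1_le (w : ℝ) : Real.sqrt (1 + w ^ 2) ≤ 1 + |w| := by
  rw [show (1:ℝ) + |w| = Real.sqrt ((1 + |w|)^2) by
    rw [Real.sqrt_sq (by positivity)]]
  exact Real.sqrt_le_sqrt (by nlinarith [abs_nonneg w, sq_abs w])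

lemma phiAux_pos (w : ℝ) : 0 < phiAux w := by
  unfold phiAux
  nlinarith [sq1_sq w, sq1_pos w, abs_le_sq1 w, neg_abs_le w]

lemma phiAux_mul_neg (w : ℝ) : phiAux w * phiAux (-w) = 1 := by
  unfold phiAux
  have h := sq1_sq w
  have h2 : (-w) ^ 2 = w ^ 2 := by ring
  rw [h2]
  nlinarith [h]

lemma phiAux_le (w : ℝ) : phiAux w ≤ 1 + 2 * |w| := by
  have := sq1_le w
  have := le_abs_self w
  unfold phiAux; linarith

lemma phiAux_inv_le (w : ℝ) : (phiAux w)⁻¹ ≤ 1 + 2 * |w| := by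
  have h1 : (phiAux w)⁻¹ = phiAux (-w) :=
    inv_eq_of_mul_eq_one_left (by rw [mul_comm]; exact phiAux_mul_neg w)
  rw [h1]
  simpa using phiAux_le (-w)

lemma hasDerivAt_phiAux (w : ℝ) :
    HasDerivAt phiAux (phiAux w / Real.sqrt (1 + w ^ 2)) w := by
  have h1 : HasDerivAt (fun w : ℝ => 1 + w ^ 2) (2 * w) w := by
    simpa using ((hasDerivAt_pow 2 w).const_add 1)
  have h2 : HasDerivAt (fun w : ℝ => Real.sqrt (1 + w ^ 2))
      (2 * w / (2 * Real.sqrt (1 + w ^ 2))) w :=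
    (Real.hasDerivAt_sqrt (by positivity)).comp w h1 |>.congr_deriv (by ring)
  have h3 := (hasDerivAt_id w).add h2
  refine h3.congr_deriv ?_
  have hs := (sq1_pos w).ne'
  field_simp [phiAux]
  rw [phiAux]; ring

-- injectivity of phiAux
lemma phiAux_injective : Function.Injective phiAux := by
  intro a b hab
  have ha := phiAux_pos a
  have h : ∀ w : ℝ, w = ((phiAux w) ^ 2 - 1) / (2 * phiAux w) := by
    intro w
    have hp := phiAux_pos w
    have h2 := sq1_sq w
    field_simp
    unfold phiAux at *
    nlinarith
  rw [h a, h b, hab]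

set_option maxHeartbeats 1000000 in
lemma key_integral (lam ν z : ℝ) (hlam : 0 < lam) (hz : 0 < z) :
    (∫ s in Ioi (0:ℝ), s ^ (ν - 1) * Real.exp (-lam * s - z ^ 2 / (4 * lam * s)))
    = (2 * (z / (2 * lam)) ^ ν * Real.exp (-z) / Real.sqrt (2 * z)) *
      ∫ v : ℝ, phiAux (v / Real.sqrt (2 * z)) ^ (2 * ν) /
        Real.sqrt (1 + (v / Real.sqrt (2 * z)) ^ 2) * Real.exp (-v ^ 2) := by
  set b := Real.sqrt (2 * z) with hbdef
  have hb : 0 < b := Real.sqrt_pos.2 (by linarith)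
  have hb2 : b ^ 2 = 2 * z := Real.sq_sqrt (by linarith)
  set c := z / (2 * lam) with hcdef
  have hc : 0 < c := by positivity
  set Φ : ℝ → ℝ := fun v => c * phiAux (v / b) ^ 2 with hΦdef
  have hΦpos : ∀ v, 0 < Φ v := fun v => by
    have := phiAux_pos (v / b); positivity
  have hΦd : ∀ v, HasDerivAt Φ (2 * c * phiAux (v / b) ^ 2 /
      (Real.sqrt (1 + (v / b) ^ 2) * b)) v := by
    intro v
    have h1 : HasDerivAt (fun v : ℝ => v / b) (1 / b) v := by
      simpa using (hasDerivAt_id v).div_const b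
    have h2 : HasDerivAt (fun v : ℝ => phiAux (v / b))
        (phiAux (v / b) / Real.sqrt (1 + (v / b) ^ 2) * (1 / b)) v :=
      by have := (hasDerivAt_phiAux (v / b)).comp v h1; exact this
    have h3 := (h2.pow 2).const_mul c
    refine h3.congr_deriv ?_
    have hS := (sq1_pos (v / b)).ne'
    field_simp
    ring
  have hΦinj : Function.Injective Φ := by
    intro a b' hab
    have h1 : phiAux (a / b) ^ 2 = phiAux (b' / b) ^ 2 := by
      have := hc.ne'
      simp only [hΦdef, mul_eq_mul_left_iff] at hab
      rcases hab with h | h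
      · exact h
      · exact absurd h hc.ne'
    have h2 : phiAux (a / b) = phiAux (b' / b) := by
      nlinarith [phiAux_pos (a / b), phiAux_pos (b' / b)]
    have h3 := phiAux_injective h2
    field_simp [hb.ne'] at h3
    exact h3
  have himg : Φ '' univ = Ioi (0:ℝ) := by
    apply Subset.antisymm
    · rintro x ⟨v, -, rfl⟩
      exact hΦpos v
    · rintro s hs
      have hs0 : (0:ℝ) < s := hs
      set a := Real.sqrt (s / c) with hadef
      have ha : 0 < a := Real.sqrt_pos.2 (by positivity)
      have ha2 : a ^ 2 = s / c := Real.sq_sqrt (by positivity)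
      set w := (a ^ 2 - 1) / (2 * a) with hwdef
      have hphiw : phiAux w = a := by
        have h1 : 1 + w ^ 2 = ((a ^ 2 + 1) / (2 * a)) ^ 2 := by
          rw [hwdef]; field_simp; ring
        have h2 : Real.sqrt (1 + w ^ 2) = (a ^ 2 + 1) / (2 * a) := by
          rw [h1, Real.sqrt_sq (by positivity)]
        rw [phiAux, h2, hwdef]
        field_simp
        ring
      refine ⟨b * w, trivial, ?_⟩
      have hbw : b * w / b = w := by field_simp
      rw [hΦdef]
      simp only [hbw]
      rw [hphiw, ha2]
      field_simp
  have hsub := integral_image_eq_integral_abs_deriv_smul (MeasurableSet.univ)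
    (fun x (_ : x ∈ univ) => (hΦd x).hasDerivWithinAt) (hΦinj.injOn)
    (fun s => s ^ (ν - 1) * Real.exp (-lam * s - z ^ 2 / (4 * lam * s)))
  rw [himg] at hsub
  rw [hsub, Measure.restrict_univ]
  have hpt : ∀ v : ℝ,
      |2 * c * phiAux (v / b) ^ 2 / (Real.sqrt (1 + (v / b) ^ 2) * b)| •
        (Φ v ^ (ν - 1) * Real.exp (-lam * Φ v - z ^ 2 / (4 * lam * Φ v)))
      = (2 * c ^ ν * Real.exp (-z) / b) *
        (phiAux (v / b) ^ (2 * ν) / Real.sqrt (1 + (v / b) ^ 2) *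
          Real.exp (-v ^ 2)) := by
    intro v
    set w := v / b with hwdef
    set P := phiAux w with hPdef
    have hP : 0 < P := phiAux_pos w
    set S := Real.sqrt (1 + w ^ 2) with hSdef
    have hS : 0 < S := sq1_pos w
    have habs : |2 * c * P ^ 2 / (S * b)| = 2 * c * P ^ 2 / (S * b) := by
      rw [abs_of_pos]; positivity
    -- exponent identity
    have hw2 : 2 * z * w ^ 2 = v ^ 2 := by
      rw [hwdef, div_pow, ← hb2]; field_simp
    have hPP : P ^ 2 + (P ^ 2)⁻¹ = 2 + 4 * w ^ 2 := by
      have h1 : phiAux (-w) = S - w := by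
        rw [phiAux, hSdef]; rw [neg_pow]; ring_nf
      have h2 : P * (S - w) = 1 := by rw [← h1]; exact phiAux_mul_neg w
      have h3 : (P ^ 2)⁻¹ = (S - w) ^ 2 := by
        refine inv_eq_of_mul_eq_one_right ?_
        rw [← mul_pow, h2]; norm_num
      have hS2 : S ^ 2 = 1 + w ^ 2 := sq1_sq w
      have hPws : P = w + S := rfl
      rw [h3, hPws]; nlinarith [hS2]
    have hexp : -lam * Φ v - z ^ 2 / (4 * lam * Φ v) = -z - v ^ 2 := by
      have h1 : lam * Φ v = z / 2 * P ^ 2 := by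
        rw [hΦdef]; simp only [← hwdef, ← hPdef]
        rw [hcdef]; field_simp
      have h2 : z ^ 2 / (4 * lam * Φ v) = z / 2 * (P ^ 2)⁻¹ := by
        rw [hΦdef]; simp only [← hwdef, ← hPdef]
        rw [hcdef]; field_simp; ring
      rw [show -lam * Φ v - z ^ 2 / (4 * lam * Φ v)
          = -(lam * Φ v + z ^ 2 / (4 * lam * Φ v)) by ring, h1, h2]
      have : z / 2 * P ^ 2 + z / 2 * (P ^ 2)⁻¹ = z / 2 * (2 + 4 * w ^ 2) := by
        rw [← mul_add, hPP]
      rw [this]; nlinarith [hw2]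
    -- rpow algebra
    have hΦrpow : Φ v ^ (ν - 1) = c ^ (ν - 1) * P ^ (2 * (ν - 1)) := by
      rw [hΦdef]; simp only [← hwdef, ← hPdef]
      rw [Real.mul_rpow hc.le (by positivity), ← Real.rpow_natCast P 2,
        ← Real.rpow_mul hP.le]
      norm_num
    rw [habs, hexp, hΦrpow]
    rw [smul_eq_mul]
    have hc1 : c * c ^ (ν - 1) = c ^ ν := by
      have h := Real.rpow_add hc 1 (ν - 1)
      rw [Real.rpow_one, show (1:ℝ) + (ν - 1) = ν by ring] at h
      exact h.symm
    have hP1 : P ^ 2 * P ^ (2 * (ν - 1)) = P ^ (2 * ν) := by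
      rw [← Real.rpow_natCast P 2, ← Real.rpow_add hP]
      norm_num
      congr 1; ring
    have hee : Real.exp (-z - v ^ 2) = Real.exp (-z) * Real.exp (-v ^ 2) := by
      rw [← Real.exp_add]; ring_nf
    rw [hee, ← hc1, ← hP1]
    clear_value P S w
    field_simp
  simp_rw [hpt]
  rw [integral_const_mul]

lemma continuous_phiAux : Continuous phiAux :=
  continuous_id.add ((continuous_const.add (continuous_pow 2)).sqrt)

lemma phiAux_zero : phiAux 0 = 1 := by simp [phiAux]

lemma rpow_le_max (a M p : ℝ) (ha : 0 < a) (h1 : a ≤ M) (h2 : a⁻¹ ≤ M)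
    (hM : 1 ≤ M) : a ^ p ≤ M ^ |p| := by
  rcases le_or_gt 0 p with hp | hp
  · calc a ^ p ≤ M ^ p := Real.rpow_le_rpow ha.le h1 hp
    _ ≤ M ^ |p| := Real.rpow_le_rpow_of_exponent_le hM (le_abs_self p)
  · have habs : |p| = -p := abs_of_neg hp
    have : a ^ p = (a⁻¹) ^ (-p) := by
      rw [Real.inv_rpow ha.le, ← Real.rpow_neg ha.le, neg_neg]
    rw [this, habs]
    exact Real.rpow_le_rpow (by positivity) h2 (by linarith)

lemma tendsto_sqrt_atTop : Tendsto Real.sqrt atTop atTop := by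
  apply tendsto_atTop_atTop.2
  intro C
  refine ⟨(max C 0) ^ 2, fun z hz => ?_⟩
  calc C ≤ max C 0 := le_max_left _ _
  _ = Real.sqrt ((max C 0) ^ 2) := (Real.sqrt_sq (le_max_right _ _)).symm
  _ ≤ Real.sqrt z := Real.sqrt_le_sqrt hz

lemma integral_exp_neg_sq : (∫ v : ℝ, Real.exp (-v ^ 2)) = Real.sqrt π := by
  have h := integral_gaussian 1
  simpa using h

lemma tendsto_J (p : ℝ) :
    Tendsto (fun z : ℝ => ∫ v : ℝ,
      phiAux (v / Real.sqrt (2 * z)) ^ p /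
        Real.sqrt (1 + (v / Real.sqrt (2 * z)) ^ 2) * Real.exp (-v ^ 2))
      atTop (𝓝 (Real.sqrt π)) := by
  rw [← integral_exp_neg_sq]
  set m : ℕ := ⌈|p|⌉₊ with hm
  apply tendsto_integral_filter_of_dominated_convergence
    (fun v : ℝ => (3:ℝ) ^ m * (Real.exp (-v ^ 2) + |v| ^ m * Real.exp (-v ^ 2)))
  · -- measurability
    filter_upwards [eventually_ge_atTop (1:ℝ)] with z hz
    have hb : 0 < Real.sqrt (2 * z) := Real.sqrt_pos.2 (by linarith)
    have hcont : Continuous fun v : ℝ =>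
        phiAux (v / Real.sqrt (2 * z)) ^ p /
          Real.sqrt (1 + (v / Real.sqrt (2 * z)) ^ 2) * Real.exp (-v ^ 2) := by
      have h1 : Continuous fun v : ℝ => phiAux (v / Real.sqrt (2 * z)) :=
        continuous_phiAux.comp (continuous_id.div_const _)
      have h2 : Continuous fun v : ℝ => phiAux (v / Real.sqrt (2 * z)) ^ p :=
        h1.rpow_const fun v => Or.inl (phiAux_pos _).ne'
      have h3 : Continuous fun v : ℝ =>
          Real.sqrt (1 + (v / Real.sqrt (2 * z)) ^ 2) :=
        ((continuous_const.add ((continuous_id.div_const _).pow 2)).sqrt)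
      exact ((h2.div h3 fun v => (sq1_pos _).ne')).mul
        (continuous_neg.comp (continuous_pow 2) |>.rexp)
    exact hcont.aestronglyMeasurable
  · -- bound
    filter_upwards [eventually_ge_atTop (1:ℝ)] with z hz
    refine Eventually.of_forall fun v => ?_
    have hb : 1 ≤ Real.sqrt (2 * z) := by
      rw [show (1:ℝ) = Real.sqrt 1 from Real.sqrt_one.symm]
      exact Real.sqrt_le_sqrt (by linarith)
    set w := v / Real.sqrt (2 * z) with hw
    have habsw : |w| ≤ |v| := by
      rw [hw, abs_div, abs_of_nonneg (by linarith : (0:ℝ) ≤ Real.sqrt (2 * z))]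
      exact div_le_self (abs_nonneg v) hb
    set M : ℝ := 1 + 2 * |v| with hM
    have hM1 : (1:ℝ) ≤ M := by have := abs_nonneg v; rw [hM]; linarith
    have hφM : phiAux w ≤ M := le_trans (phiAux_le w) (by rw [hM]; linarith)
    have hφMi : (phiAux w)⁻¹ ≤ M := le_trans (phiAux_inv_le w) (by rw [hM]; linarith)
    have h1 : phiAux w ^ p ≤ M ^ (m:ℝ) := by
      calc phiAux w ^ p ≤ M ^ |p| := rpow_le_max _ _ _ (phiAux_pos w) hφM hφMi hM1
      _ ≤ M ^ (m:ℝ) := Real.rpow_le_rpow_of_exponent_le hM1 (Nat.le_ceil _)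
    rw [Real.rpow_natCast] at h1
    have h2 : M ^ m ≤ 3 ^ m * (1 + |v| ^ m) := by
      have hMle : M ≤ 3 * max 1 |v| := by
        rcases le_total |v| 1 with h | h
        · calc M = 1 + 2 * |v| := hM
          _ ≤ 3 := by linarith
          _ ≤ 3 * max 1 |v| := by nlinarith [le_max_left (1:ℝ) |v|]
        · calc M = 1 + 2 * |v| := hM
          _ ≤ 3 * |v| := by linarith
          _ ≤ 3 * max 1 |v| := by nlinarith [le_max_right (1:ℝ) |v|]
      calc M ^ m ≤ (3 * max 1 |v|) ^ m :=
            pow_le_pow_left₀ (by positivity) hMle m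
      _ = 3 ^ m * (max 1 |v|) ^ m := mul_pow _ _ _
      _ ≤ 3 ^ m * (1 + |v| ^ m) := by
          gcongr
          rcases le_total 1 |v| with h | h
          · rw [max_eq_right h]; nlinarith [pow_nonneg (abs_nonneg v) m]
          · rw [max_eq_left h]
            have : (0:ℝ) ≤ |v| ^ m := pow_nonneg (abs_nonneg v) m
            simp only [one_pow]; linarith
    have hS1 : 1 ≤ Real.sqrt (1 + w ^ 2) := one_le_sq1 w
    have hnn : 0 ≤ phiAux w ^ p / Real.sqrt (1 + w ^ 2) * Real.exp (-v ^ 2) := by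
      have := (phiAux_pos w)
      positivity
    rw [Real.norm_of_nonneg hnn]
    have hdivle : phiAux w ^ p / Real.sqrt (1 + w ^ 2) ≤ phiAux w ^ p :=
      div_le_self (Real.rpow_nonneg (phiAux_pos w).le p) hS1
    calc phiAux w ^ p / Real.sqrt (1 + w ^ 2) * Real.exp (-v ^ 2)
        ≤ M ^ m * Real.exp (-v ^ 2) := by
          apply mul_le_mul_of_nonneg_right (le_trans hdivle h1) (Real.exp_nonneg _)
      _ ≤ 3 ^ m * (1 + |v| ^ m) * Real.exp (-v ^ 2) := by
          apply mul_le_mul_of_nonneg_right h2 (Real.exp_nonneg _)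
      _ = 3 ^ m * (Real.exp (-v ^ 2) + |v| ^ m * Real.exp (-v ^ 2)) := by ring
  · -- integrability of bound
    have h1 : Integrable fun v : ℝ => Real.exp (-v ^ 2) := by
      have := integrable_exp_neg_mul_sq (one_pos)
      simpa using this
    have h2 : Integrable fun v : ℝ => |v| ^ m * Real.exp (-v ^ 2) := by
      have h := (integrable_rpow_mul_exp_neg_mul_sq one_pos
        (s := (m:ℝ)) (by exact_mod_cast lt_of_lt_of_le neg_one_lt_zero (Nat.cast_nonneg m))).abs
      apply h.congr
      refine Eventually.of_forall fun v => ?_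
      simp only [Real.rpow_natCast, abs_mul, abs_pow, Real.abs_exp, neg_mul, one_mul]
    exact (h1.add h2).const_mul _
  · -- pointwise limit
    refine Eventually.of_forall fun v => ?_
    have hdenom : Tendsto (fun z : ℝ => Real.sqrt (2 * z)) atTop atTop :=
      _root_.tendsto_sqrt_atTop.comp (tendsto_id.const_mul_atTop two_pos)
    have hw : Tendsto (fun z : ℝ => v / Real.sqrt (2 * z)) atTop (𝓝 0) :=
      Tendsto.div_atTop tendsto_const_nhds hdenom
    have hg : ContinuousAt (fun w : ℝ =>
        phiAux w ^ p / Real.sqrt (1 + w ^ 2)) 0 := by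
      have h1 : ContinuousAt (fun w : ℝ => phiAux w ^ p) 0 :=
        (continuous_phiAux.continuousAt).rpow_const (Or.inl (phiAux_pos 0).ne')
      have h2 : ContinuousAt (fun w : ℝ => Real.sqrt (1 + w ^ 2)) 0 :=
        ((continuous_const.add (continuous_pow 2)).sqrt).continuousAt
      exact h1.div h2 (sq1_pos 0).ne'
    have hval : phiAux (0:ℝ) ^ p / Real.sqrt (1 + (0:ℝ) ^ 2) = 1 := by
      rw [phiAux_zero, Real.one_rpow]
      norm_num
    have := (hg.tendsto.comp hw).mul_const (Real.exp (-v ^ 2))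
    rw [show (fun w : ℝ => phiAux w ^ p / Real.sqrt (1 + w ^ 2)) 0
        * Real.exp (-v ^ 2) = Real.exp (-v ^ 2) by
      simp only []; rw [hval]; ring] at this
    exact this

/-- The steady-state generation-`k` density in the normalized distance
`z = |x|√(λ/D)` from the origin:
`𝒜_k(z) = (μ(λB)^k/(k!(4πD)^{n/2})) ∫₀^∞ s^{k−n/2} exp(−λs − z²/(4λs)) ds`. -/
noncomputable def steadyDensity (n : ℕ) (lam D B mu : ℝ) (k : ℕ) (z : ℝ) : ℝ :=
  (mu * (lam * B) ^ k / ((Nat.factorial k : ℝ) * (4 * π * D) ^ ((n : ℝ) / 2))) *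
    ∫ s in Set.Ioi (0:ℝ),
      s ^ ((k : ℝ) - (n : ℝ) / 2) * Real.exp (-lam * s - z ^ 2 / (4 * lam * s))

/-- Exponential decay away from the origin: with `ν = k − n/2 + 1`,
`𝒜_k(z) e^z z^{1/2−ν} → (2μ(λB)^k/(k!(4πD)^{n/2})) (2λ)^{−ν} √(π/2)` as `z → ∞`. -/
theorem steadyDensity_exponential_decay
    (n : ℕ) (hn : 1 ≤ n) (lam D B mu : ℝ)
    (hlam : 0 < lam) (hD : 0 < D) (hB : 0 < B) (hmu : 0 < mu) (k : ℕ) :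
    Filter.Tendsto
      (fun z : ℝ => steadyDensity n lam D B mu k z * Real.exp z *
        z ^ ((1:ℝ) / 2 - ((k : ℝ) - (n : ℝ) / 2 + 1)))
      atTop
      (nhds ((2 * mu * (lam * B) ^ k /
          ((Nat.factorial k : ℝ) * (4 * π * D) ^ ((n : ℝ) / 2))) *
        (2 * lam) ^ (-((k : ℝ) - (n : ℝ) / 2 + 1)) * Real.sqrt (π / 2))) := by
  set ν : ℝ := (k : ℝ) - (n : ℝ) / 2 + 1 with hν
  set C₀ : ℝ := mu * (lam * B) ^ k /
      ((Nat.factorial k : ℝ) * (4 * π * D) ^ ((n : ℝ) / 2)) with hC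
  have hs2 : Real.sqrt 2 * Real.sqrt 2 = 2 := Real.mul_self_sqrt (by norm_num)
  have hmain := (tendsto_J (2 * ν)).const_mul (C₀ * Real.sqrt 2 * (2 * lam) ^ (-ν))
  have heq : (fun z : ℝ => (C₀ * Real.sqrt 2 * (2 * lam) ^ (-ν)) *
      ∫ v : ℝ, phiAux (v / Real.sqrt (2 * z)) ^ (2 * ν) /
        Real.sqrt (1 + (v / Real.sqrt (2 * z)) ^ 2) * Real.exp (-v ^ 2))
      =ᶠ[atTop] (fun z : ℝ => steadyDensity n lam D B mu k z * Real.exp z *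
        z ^ ((1:ℝ) / 2 - ν)) := by
    filter_upwards [eventually_gt_atTop (0:ℝ)] with z hz
    have hsd : steadyDensity n lam D B mu k z =
        C₀ * ((2 * (z / (2 * lam)) ^ ν * Real.exp (-z) / Real.sqrt (2 * z)) *
          ∫ v : ℝ, phiAux (v / Real.sqrt (2 * z)) ^ (2 * ν) /
            Real.sqrt (1 + (v / Real.sqrt (2 * z)) ^ 2) * Real.exp (-v ^ 2)) := by
      rw [steadyDensity, show ((k : ℝ) - (n : ℝ) / 2) = ν - 1 by rw [hν]; ring,
        key_integral lam ν z hlam hz]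
    have hA : 2 * (z / (2 * lam)) ^ ν * Real.exp (-z) / Real.sqrt (2 * z) *
        Real.exp z * z ^ ((1:ℝ) / 2 - ν) = Real.sqrt 2 * (2 * lam) ^ (-ν) := by
      have hzz : (z / (2 * lam)) ^ ν = z ^ ν * ((2 * lam) ^ ν)⁻¹ := by
        rw [Real.div_rpow hz.le (by positivity : (0:ℝ) ≤ 2 * lam), div_eq_mul_inv]
      have hE : (2 * lam) ^ (-ν) = ((2 * lam) ^ ν)⁻¹ :=
        Real.rpow_neg (by positivity) ν
      have hzsum : z ^ ν * z ^ ((1:ℝ) / 2 - ν) = Real.sqrt z := by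
        rw [← Real.rpow_add hz, show ν + ((1:ℝ) / 2 - ν) = 1 / 2 by ring,
          Real.sqrt_eq_rpow]
      have hsq : Real.sqrt (2 * z) = Real.sqrt 2 * Real.sqrt z :=
        Real.sqrt_mul (by norm_num) z
      have hez : Real.exp (-z) * Real.exp z = 1 := by
        rw [← Real.exp_add]; simp
      have hsz : 0 < Real.sqrt z := Real.sqrt_pos.2 hz
      rw [hE]
      calc 2 * (z / (2 * lam)) ^ ν * Real.exp (-z) / Real.sqrt (2 * z) *
            Real.exp z * z ^ ((1:ℝ) / 2 - ν)
          = (Real.exp (-z) * Real.exp z) * (z ^ ν * z ^ ((1:ℝ) / 2 - ν)) *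
            ((2 * lam) ^ ν)⁻¹ * 2 / (Real.sqrt 2 * Real.sqrt z) := by
            rw [hzz, hsq]; ring
        _ = Real.sqrt z * ((2 * lam) ^ ν)⁻¹ * 2 / (Real.sqrt 2 * Real.sqrt z) := by
            rw [hez, hzsum]; ring
        _ = Real.sqrt 2 * ((2 * lam) ^ ν)⁻¹ := by
            rw [div_eq_iff (by positivity)]
            linear_combination (-(Real.sqrt z * ((2 * lam) ^ ν)⁻¹)) * hs2
    rw [hsd]
    symm
    calc C₀ * ((2 * (z / (2 * lam)) ^ ν * Real.exp (-z) / Real.sqrt (2 * z)) *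
          ∫ v : ℝ, phiAux (v / Real.sqrt (2 * z)) ^ (2 * ν) /
            Real.sqrt (1 + (v / Real.sqrt (2 * z)) ^ 2) * Real.exp (-v ^ 2)) *
          Real.exp z * z ^ ((1:ℝ) / 2 - ν)
        = (2 * (z / (2 * lam)) ^ ν * Real.exp (-z) / Real.sqrt (2 * z) *
            Real.exp z * z ^ ((1:ℝ) / 2 - ν)) *
          (C₀ * ∫ v : ℝ, phiAux (v / Real.sqrt (2 * z)) ^ (2 * ν) /
            Real.sqrt (1 + (v / Real.sqrt (2 * z)) ^ 2) * Real.exp (-v ^ 2)) := by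
          ring
      _ = _ := by rw [hA]; ring
  have hfinal := hmain.congr' heq
  convert hfinal using 2
  have hpd : Real.sqrt (π / 2) = Real.sqrt π / Real.sqrt 2 :=
    Real.sqrt_div pi_pos.le 2
  rw [hpd, hC]
  field_simp
  ring_nf
  rw [Real.sq_sqrt (by norm_num : (0:ℝ) ≤ 2)]
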